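/- Let c > 0, t > 0, let μ be a probability measure on (-∞, 0] with μ^{(c)} < ∞, and let w : (-∞, t] → [0, ∞) be Borel measurable with M := sup_{v ≤ 0} e^{c v} w(v) < ∞. Then ∫_0^t ∫_{(-∞,0]} w(s + u) μ(du) ds ≤ (M/c) μ^{(c)} + ∫_0^t w(s) ds, as an inequality of integrals of nonnegative functions (valued in [0, ∞]). -/

import Mathlib

open MeasureTheory
open scoped ENNReal

/-- `μ^{(b)} = ∫_{(-∞,0]} e^{-b u} μ(du)`. -/
noncomputable def muExp (μ : Measure ℝ) (b : ℝ) : ℝ≥0∞ :=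
  ∫⁻ u, ENNReal.ofReal (Real.exp (-b * u)) ∂μ

lemma shift_lem (f : ℝ → ℝ≥0∞) (u a b : ℝ) :
    ∫⁻ s in Set.Ioc a b, f (s + u) = ∫⁻ v in Set.Ioc (a + u) (b + u), f v := by
  rw [← lintegral_indicator measurableSet_Ioc _, ← lintegral_indicator measurableSet_Ioc _,
    ← lintegral_add_right_eq_self (fun v => (Set.Ioc (a + u) (b + u)).indicator f v) u]
  congr 1; ext s
  by_cases h : s ∈ Set.Ioc a b
  · rw [Set.indicator_of_mem h, Set.indicator_of_mem
      (by constructor <;> [exact add_lt_add_left h.1 u; exact add_le_add_left h.2 u])]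
  · rw [Set.indicator_of_notMem h, Set.indicator_of_notMem (by
      intro hm; exact h ⟨lt_of_add_lt_add_right hm.1, le_of_add_le_add_right hm.2⟩)]

lemma exp_int_lem (c u : ℝ) (hc : 0 < c) : ∫ v in u..0, Real.exp (-c * v) = (Real.exp (-c*u) - 1)/c := by
  have h := intervalIntegral.integral_comp_mul_left (a := u) (b := 0) (c := c)
    (f := fun x => Real.exp (-x)) hc.ne'
  simp only [neg_mul] at *
  rw [h, intervalIntegral.integral_comp_neg (fun x => Real.exp x), integral_exp, smul_eq_mul]
  field_simp
  simp

theorem stmt_7 (c t M : ℝ) (hc : 0 < c) (ht : 0 < t)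
    (μ : Measure ℝ) [IsProbabilityMeasure μ] (hsupp : μ (Set.Ioi 0) = 0)
    (hfin : muExp μ c < ⊤)
    (w : ℝ → ℝ) (hw : Measurable w) (hwnn : ∀ v, v ≤ t → 0 ≤ w v)
    (hM : IsLUB {x : ℝ | ∃ v ≤ (0 : ℝ), x = Real.exp (c * v) * w v} M) :
    (∫⁻ s in Set.Ioc 0 t, ∫⁻ u in Set.Iic 0, ENNReal.ofReal (w (s + u)) ∂μ) ≤
      ENNReal.ofReal (M / c) * muExp μ c +
        ∫⁻ s in Set.Ioc 0 t, ENNReal.ofReal (w s) := by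
  have hM0 : 0 ≤ M := le_trans (by simpa using hwnn 0 ht.le) (hM.1 ⟨0, le_refl 0, by simp⟩)
  have hMc : 0 ≤ M / c := div_nonneg hM0 hc.le
  -- pointwise bound
  have hwle : ∀ v : ℝ, v ≤ 0 → w v ≤ M * Real.exp (-c * v) := by
    intro v hv
    have h1 : Real.exp (c * v) * w v ≤ M := hM.1 ⟨v, hv, rfl⟩
    calc w v = Real.exp (-c * v) * (Real.exp (c * v) * w v) := by
          rw [← mul_assoc, ← Real.exp_add]; ring_nf; simp
      _ ≤ Real.exp (-c * v) * M := mul_le_mul_of_nonneg_left h1 (Real.exp_pos _).le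
      _ = M * Real.exp (-c * v) := mul_comm _ _
  set B := ∫⁻ s in Set.Ioc 0 t, ENNReal.ofReal (w s) with hB
  -- swap integrals
  have hmeas : Measurable (fun p : ℝ × ℝ => ENNReal.ofReal (w (p.1 + p.2))) :=
    ENNReal.measurable_ofReal.comp (hw.comp (measurable_fst.add measurable_snd))
  rw [lintegral_lintegral_swap hmeas.aemeasurable]
  -- bound inner integral for each u ≤ 0
  have key : ∀ u : ℝ, u ∈ Set.Iic 0 →
      (∫⁻ s in Set.Ioc 0 t, ENNReal.ofReal (w (s + u))) ≤
        ENNReal.ofReal (M / c) * ENNReal.ofReal (Real.exp (-c * u)) + B := by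
    intro u hu
    have hu0 : u ≤ 0 := hu
    have hshift : (∫⁻ s in Set.Ioc 0 t, ENNReal.ofReal (w (s + u))) =
        ∫⁻ v in Set.Ioc u (t + u), ENNReal.ofReal (w v) := by
      have := shift_lem (fun v => ENNReal.ofReal (w v)) u 0 t
      simpa using this
    rw [hshift]
    have hsub : Set.Ioc u (t + u) ⊆ Set.Ioc u 0 ∪ Set.Ioc 0 t := by
      rw [Set.Ioc_union_Ioc_eq_Ioc hu0 ht.le]
      exact Set.Ioc_subset_Ioc_right (by linarith)
    calc (∫⁻ v in Set.Ioc u (t + u), ENNReal.ofReal (w v))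
        ≤ ∫⁻ v in Set.Ioc u 0 ∪ Set.Ioc 0 t, ENNReal.ofReal (w v) :=
          lintegral_mono_set hsub
      _ ≤ (∫⁻ v in Set.Ioc u 0, ENNReal.ofReal (w v)) + B :=
          lintegral_union_le _ _ _
      _ ≤ ENNReal.ofReal (M / c) * ENNReal.ofReal (Real.exp (-c * u)) + B := by
          gcongr
          have hbd : (∫⁻ v in Set.Ioc u 0, ENNReal.ofReal (w v)) ≤
              ∫⁻ v in Set.Ioc u 0, ENNReal.ofReal (M * Real.exp (-c * v)) := by
            refine setLIntegral_mono (by fun_prop) ?_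
            intro v hv
            exact ENNReal.ofReal_le_ofReal (hwle v hv.2)
          refine hbd.trans ?_
          have hint : IntegrableOn (fun v => M * Real.exp (-c * v)) (Set.Ioc u 0) := by
            apply Continuous.integrableOn_Ioc
            fun_prop
          rw [← ofReal_integral_eq_lintegral_ofReal hint
            (Filter.Eventually.of_forall fun v => mul_nonneg hM0 (Real.exp_pos _).le)]
          rw [← ENNReal.ofReal_mul hMc]
          apply ENNReal.ofReal_le_ofReal
          rw [MeasureTheory.integral_const_mul, ← intervalIntegral.integral_of_le hu0,
            exp_int_lem c u hc]
          rw [div_mul_eq_mul_div, mul_div_assoc]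
          gcongr
          linarith [Real.exp_pos (-c * u)]
  calc (∫⁻ u in Set.Iic 0, ∫⁻ s in Set.Ioc 0 t, ENNReal.ofReal (w (s + u)) ∂volume ∂μ)
      ≤ ∫⁻ u in Set.Iic 0,
          (ENNReal.ofReal (M / c) * ENNReal.ofReal (Real.exp (-c * u)) + B) ∂μ :=
        setLIntegral_mono (by fun_prop) key
    _ = ENNReal.ofReal (M / c) * (∫⁻ u in Set.Iic 0, ENNReal.ofReal (Real.exp (-c * u)) ∂μ)
        + B * μ (Set.Iic 0) := by
        rw [lintegral_add_right _ measurable_const, setLIntegral_const,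
          lintegral_const_mul _ (by fun_prop)]
    _ ≤ ENNReal.ofReal (M / c) * muExp μ c + B * 1 := by
        gcongr
        · exact setLIntegral_le_lintegral _ _
        · exact prob_le_one
    _ = ENNReal.ofReal (M / c) * muExp μ c + B := by rw [mul_one]
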